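/- Let p ≡ 1 (mod 4) be prime and G = ⟨x,y,z | x^p = y^p = z⁴ = 1, xy = yx, z⁻¹xz = x, z⁻¹yz = y⁻¹⟩. Then G admits no DRAD difference set with subgroup H = ⟨x, z²⟩ (the center of G). -/

import Mathlib

open Finset

private lemma pow_val_add {M : Type*} [Monoid M] {w : M} {n : ℕ} [NeZero n] (hw : w ^ n = 1)
    (a b : ZMod n) : w ^ ((a + b).val) = w ^ a.val * w ^ b.val := by
  have key : ∀ m : ℕ, w ^ (m % n) = w ^ m := fun m => by
    conv_rhs => rw [← Nat.div_add_mod m n]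
    rw [pow_add, pow_mul, hw, one_pow, one_mul]
  rw [ZMod.val_add, key, pow_add]

private lemma pow_val_neg {M : Type*} [Group M] {w : M} {n : ℕ} [NeZero n] (hw : w ^ n = 1)
    (a : ZMod n) : w ^ ((-a).val) = (w ^ a.val)⁻¹ := by
  apply eq_inv_of_mul_eq_one_left
  rw [← pow_val_add hw, neg_add_cancel, ZMod.val_zero, pow_zero]

/-- normal form map -/
private def nf {G : Type*} [Group G] (p : ℕ) (x y z : G) (t : ZMod p × ZMod p × ZMod 4) : G :=
  x ^ t.1.val * y ^ t.2.1.val * z ^ t.2.2.val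

section NF

variable {G : Type*} [Group G] {p : ℕ} [NeZero p] {x y z : G}
  (hxp : x ^ p = 1) (hyp : y ^ p = 1) (hz4 : z ^ 4 = 1)
  (hxy : x * y = y * x) (hxz : x * z = z * x) (hzy : z * y = y⁻¹ * z)

include hzy in
private lemma z_ypow (m : ℕ) : z * y ^ m = (y ^ m)⁻¹ * z := by
  induction m with
  | zero => simp
  | succ k ih =>
    rw [pow_succ, ← mul_assoc, ih, mul_assoc, hzy]
    group

include hyp hzy in
private lemma z_Y (b : ZMod p) : z * y ^ b.val = y ^ ((-b).val) * z := by
  rw [z_ypow hzy, pow_val_neg hyp]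

include hyp hzy in
private lemma zpow_Y (m : ℕ) (b : ZMod p) :
    z ^ m * y ^ b.val = y ^ (((-1 : ZMod p) ^ m * b).val) * z ^ m := by
  induction m generalizing b with
  | zero => simp
  | succ k ih =>
    have h1 : z ^ (k + 1) * y ^ b.val = z ^ k * (y ^ ((-b).val)) * z := by
      rw [pow_succ, mul_assoc, z_Y hyp hzy, ← mul_assoc]
    rw [h1, ih (-b), mul_assoc, ← pow_succ]
    congr 2
    ring_nf

end NF

section NF2

variable {G : Type*} [Group G] {p : ℕ} [NeZero p] {x y z : G}
  (hxp : x ^ p = 1) (hyp : y ^ p = 1) (hz4 : z ^ 4 = 1)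
  (hxy : x * y = y * x) (hxz : x * z = z * x) (hzy : z * y = y⁻¹ * z)

include hxp hyp hz4 hxy hxz hzy in
private lemma nf_mul (t t' : ZMod p × ZMod p × ZMod 4) :
    nf p x y z t * nf p x y z t' =
      nf p x y z (t.1 + t'.1, t.2.1 + (-1 : ZMod p) ^ t.2.2.val * t'.2.1, t.2.2 + t'.2.2) := by
  obtain ⟨a, b, c⟩ := t
  obtain ⟨a', b', c'⟩ := t'
  have cxy : Commute x y := hxy
  have cxz : Commute x z := hxz
  simp only [nf]
  calc x ^ a.val * y ^ b.val * z ^ c.val * (x ^ a'.val * y ^ b'.val * z ^ c'.val)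
      = (x ^ a.val * x ^ a'.val) * (y ^ b.val * (z ^ c.val * y ^ b'.val)) * z ^ c'.val := by
        have c1 : Commute (x ^ a'.val) (y ^ b.val) := (cxy.pow_pow _ _)
        have c2 : Commute (x ^ a'.val) (z ^ c.val) := (cxz.pow_pow _ _)
        simp only [mul_assoc]
        rw [show z ^ c.val * (x ^ a'.val * (y ^ b'.val * z ^ c'.val))
              = x ^ a'.val * (z ^ c.val * (y ^ b'.val * z ^ c'.val)) from by
            rw [← mul_assoc, ← c2.eq, mul_assoc]]
        rw [show y ^ b.val * (x ^ a'.val * (z ^ c.val * (y ^ b'.val * z ^ c'.val)))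
              = x ^ a'.val * (y ^ b.val * (z ^ c.val * (y ^ b'.val * z ^ c'.val))) from by
            rw [← mul_assoc, ← c1.eq, mul_assoc]]
    _ = (x ^ a.val * x ^ a'.val) * (y ^ b.val * (y ^ (((-1 : ZMod p) ^ c.val * b').val) * z ^ c.val)) * z ^ c'.val := by
        rw [zpow_Y hyp hzy]
    _ = x ^ ((a + a').val) * y ^ ((b + (-1 : ZMod p) ^ c.val * b').val) * z ^ ((c + c').val) := by
        rw [pow_val_add hxp, pow_val_add hyp, pow_val_add hz4]
        group

omit [NeZero p] hxp hyp hz4 in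
private lemma nf_zero : nf p x y z (0, 0, 0) = 1 := by
  simp [nf, ZMod.val_zero]

end NF2

section NF3

variable {G : Type*} [Group G] {p : ℕ} [NeZero p] {x y z : G}
  (hxp : x ^ p = 1) (hyp : y ^ p = 1) (hz4 : z ^ 4 = 1)
  (hxy : x * y = y * x) (hxz : x * z = z * x) (hzy : z * y = y⁻¹ * z)

include hxp hyp hz4 hxy hxz hzy in
private lemma nf_inv (t : ZMod p × ZMod p × ZMod 4) :
    (nf p x y z t)⁻¹ =
      nf p x y z (-t.1, -((-1 : ZMod p) ^ ((-t.2.2).val) * t.2.1), -t.2.2) := by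
  symm
  apply eq_inv_of_mul_eq_one_left
  rw [nf_mul hxp hyp hz4 hxy hxz hzy]
  simp only [neg_add_cancel]
  exact nf_zero

end NF3

/-- `D` is a `(v, |D|, l)`-difference set in `G`: every nonidentity element of `G`
occurs exactly `l` times as a quotient `x * y⁻¹` with `x, y ∈ D`. -/
def IsDiffSet {G : Type*} [Group G] [DecidableEq G] (D : Finset G) (l : ℕ) : Prop :=
  ∀ g : G, g ≠ 1 → ((D ×ˢ D).filter (fun q => q.1 * q.2⁻¹ = g)).card = l

/-- `D` is a DRAD difference set in `G` with subgroup `H`: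
`D ∩ D⁻¹ = ∅`, `G \ (D ∪ D⁻¹) = H`, and `D` is a difference set with parameter `l`. -/
def IsDRAD {G : Type*} [Group G] [DecidableEq G] (D : Finset G) (H : Subgroup G) (l : ℕ) : Prop :=
  (∀ g ∈ D, g⁻¹ ∉ D) ∧ (∀ g : G, g ∈ H ↔ (g ∉ D ∧ g⁻¹ ∉ D)) ∧ IsDiffSet D l

theorem stmt12 (p : ℕ) (hp : p.Prime) (hp4 : p % 4 = 1)
    {G : Type*} [Group G] [Fintype G] [DecidableEq G] (x y z : G)
    (hgen : Subgroup.closure ({x, y, z} : Set G) = ⊤)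
    (hx : orderOf x = p) (hy : orderOf y = p) (hz : orderOf z = 4)
    (hxy : x * y = y * x)
    (hzx : z⁻¹ * x * z = x) (hzy : z⁻¹ * y * z = y⁻¹)
    (hcard : Fintype.card G = 4 * p ^ 2) :
    ¬ ∃ (D : Finset G) (l : ℕ), IsDRAD D (Subgroup.closure ({x, z ^ 2} : Set G)) l := by
  rintro ⟨D, l, hDinv, hDH, hDiff⟩
  classical
  haveI : Fact p.Prime := ⟨hp⟩
  haveI : NeZero p := ⟨hp.ne_zero⟩
  haveI : Fact (1 < p) := ⟨hp.one_lt⟩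
  haveI : Fact (1 < 4) := ⟨by norm_num⟩
  have hxp : x ^ p = 1 := by rw [← hx]; exact pow_orderOf_eq_one x
  have hyp : y ^ p = 1 := by rw [← hy]; exact pow_orderOf_eq_one y
  have hz4 : z ^ 4 = 1 := by rw [← hz]; exact pow_orderOf_eq_one z
  have hxz : x * z = z * x := by
    calc x * z = z * (z⁻¹ * x * z) := by group
    _ = z * x := by rw [hzx]
  have h2 : z⁻¹ * y⁻¹ * z = y := by
    rw [show z⁻¹ * y⁻¹ * z = (z⁻¹ * y * z)⁻¹ from by group, hzy, inv_inv]
  have hzy' : z * y = y⁻¹ * z := by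
    have h3 := congrArg (fun w => z * w) h2
    rw [show z * (z⁻¹ * y⁻¹ * z) = y⁻¹ * z from by group] at h3
    exact h3.symm
  -- the normal form bijection
  set φ : ZMod p × ZMod p × ZMod 4 → G := nf p x y z with hφ
  have hmul : ∀ t t', φ t * φ t' =
      φ (t.1 + t'.1, t.2.1 + (-1 : ZMod p) ^ t.2.2.val * t'.2.1, t.2.2 + t'.2.2) :=
    nf_mul hxp hyp hz4 hxy hxz hzy'
  have hzero : φ (0, 0, 0) = 1 := nf_zero (x := x) (y := y) (z := z)
  have hX : ∀ a : ZMod p, φ (a, 0, 0) = x ^ a.val := by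
    intro a; simp [hφ, nf, ZMod.val_zero]
  have hx1 : φ (1, 0, 0) = x := by rw [hX 1, ZMod.val_one, pow_one]
  have hy1 : φ (0, 1, 0) = y := by
    simp [hφ, nf, ZMod.val_zero, ZMod.val_one]
  have hz1 : φ (0, 0, 1) = z := by
    simp [hφ, nf, ZMod.val_zero, show (1 : ZMod 4).val = 1 from rfl]
  have hz2 : φ (0, 0, 2) = z ^ 2 := by
    simp [hφ, nf, ZMod.val_zero, show (2 : ZMod 4).val = 2 from rfl]
  have hsurj : Function.Surjective φ := by
    let R : Subgroup G :=
      { carrier := Set.range φ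
        mul_mem' := by
          rintro _ _ ⟨t, rfl⟩ ⟨t', rfl⟩
          exact ⟨_, (hmul t t').symm⟩
        one_mem' := ⟨(0, 0, 0), hzero⟩
        inv_mem' := by
          rintro _ ⟨t, rfl⟩
          exact ⟨_, (nf_inv hxp hyp hz4 hxy hxz hzy' t).symm⟩ }
    have hle : Subgroup.closure ({x, y, z} : Set G) ≤ R := by
      rw [Subgroup.closure_le]
      rintro g (rfl | rfl | rfl)
      · exact ⟨_, hx1⟩
      · exact ⟨_, hy1⟩
      · exact ⟨_, hz1⟩
    intro g
    exact hle (hgen ▸ Subgroup.mem_top g)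
  have hbij : Function.Bijective φ := by
    rw [Fintype.bijective_iff_surjective_and_card]
    refine ⟨hsurj, ?_⟩
    simp only [Fintype.card_prod, ZMod.card, hcard]
    ring
  set e := Equiv.ofBijective φ hbij with he
  have heφ : ∀ t, e.symm (φ t) = t := fun t => e.symm_apply_apply t
  have hgφ : ∀ g : G, φ (e.symm g) = g := fun g => e.apply_symm_apply g
  set ζ : ℂ := Complex.exp (2 * Real.pi * Complex.I / p) with hζdef
  have hζ : IsPrimitiveRoot ζ p := Complex.isPrimitiveRoot_exp p hp.ne_zero
  have hζp : ζ ^ p = 1 := hζ.pow_eq_one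
  have hm4 : (-1 : ℂ) ^ 4 = 1 := by norm_num
  set χ : G → ℂ := fun g => ζ ^ (e.symm g).1.val * (-1 : ℂ) ^ (e.symm g).2.2.val with hχ
  have hχφ : ∀ t, χ (φ t) = ζ ^ t.1.val * (-1 : ℂ) ^ t.2.2.val := by
    intro t; rw [hχ]; simp only [heφ t]
  have hχmul : ∀ g h : G, χ (g * h) = χ g * χ h := by
    intro g h
    have hgh : g * h = φ (((e.symm g).1 + (e.symm h).1,
        (e.symm g).2.1 + (-1 : ZMod p) ^ (e.symm g).2.2.val * (e.symm h).2.1,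
        (e.symm g).2.2 + (e.symm h).2.2)) := by
      conv_lhs => rw [← hgφ g, ← hgφ h]
      rw [hmul]
    rw [hgh, hχφ]
    simp only [hχ]
    rw [pow_val_add hζp, pow_val_add hm4]
    ring
  have hχ1 : χ 1 = 1 := by
    have := hχφ (0, 0, 0)
    rw [hzero] at this
    simp [ZMod.val_zero] at this
    exact this
  have hχinv : ∀ g : G, χ g⁻¹ * χ g = 1 := by
    intro g; rw [← hχmul, inv_mul_cancel, hχ1]
  have hχx : χ x = ζ := by
    have := hχφ (1, 0, 0); rw [hx1] at this
    rw [this, ZMod.val_one]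
    simp [ZMod.val_zero]
  have hχz : χ z = -1 := by
    have := hχφ (0, 0, 1); rw [hz1] at this
    rw [this]
    simp [ZMod.val_zero, show (1 : ZMod 4).val = 1 from rfl]
  have hζnorm : ‖ζ‖ = 1 := Complex.norm_eq_one_of_pow_eq_one hζp hp.ne_zero
  have hχconj : ∀ g : G, (starRingEnd ℂ) (χ g) = χ g⁻¹ := by
    intro g
    have habs : χ g * (starRingEnd ℂ) (χ g) = 1 := by
      rw [Complex.mul_conj]
      rw [hχ]
      simp only [Complex.normSq_eq_norm_sq]
      rw [norm_mul, norm_pow, norm_pow, hζnorm]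
      simp
    have e1 : (starRingEnd ℂ) (χ g) = (χ g)⁻¹ := eq_inv_of_mul_eq_one_right habs
    have e2 : χ g⁻¹ = (χ g)⁻¹ := eq_inv_of_mul_eq_one_left (hχinv g)
    rw [e1, e2]
  -- vanishing sums
  have hsum_stab : ∀ (T : Finset G) (a : G), (∀ g, g ∈ T ↔ a * g ∈ T) → χ a ≠ 1 →
      ∑ g ∈ T, χ g = 0 := by
    intro T a hstab hne
    have hmap : T.map ⟨fun g => a * g, mul_right_injective a⟩ = T := by
      ext g
      simp only [mem_map, Function.Embedding.coeFn_mk]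
      constructor
      · rintro ⟨w, hw, rfl⟩; exact (hstab w).1 hw
      · intro hg
        exact ⟨a⁻¹ * g, (hstab _).2 (by simpa [mul_inv_cancel_left] using hg),
          by simp [mul_inv_cancel_left]⟩
    have h1 : ∑ g ∈ T, χ g = ∑ g ∈ T, χ (a * g) := by
      conv_lhs => rw [← hmap, Finset.sum_map]
      simp only [Function.Embedding.coeFn_mk]
    have h2 : ∑ g ∈ T, χ (a * g) = χ a * ∑ g ∈ T, χ g := by
      rw [Finset.mul_sum]
      exact Finset.sum_congr rfl fun g _ => hχmul a g
    have h3 : (χ a - 1) * ∑ g ∈ T, χ g = 0 := by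
      rw [sub_mul, one_mul, ← h2, ← h1, sub_self]
    exact ((mul_eq_zero.1 h3).resolve_left (sub_ne_zero.2 hne))
  have hGsum : ∑ g ∈ univ, χ g = 0 := by
    refine hsum_stab univ z (by simp) ?_
    rw [hχz]; norm_num
  set Hsub := Subgroup.closure ({x, z ^ 2} : Set G) with hHsub
  have hxH : x ∈ Hsub := Subgroup.subset_closure (by simp)
  have hHsum : ∑ g ∈ univ.filter (· ∈ Hsub), χ g = 0 := by
    refine hsum_stab _ x (fun g => ?_) ?_
    · simp [Finset.mem_filter, Subgroup.mul_mem_cancel_left _ hxH]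
    · rw [hχx]; exact hζ.ne_one hp.one_lt
  -- the partition
  set D' := D.image (·⁻¹) with hD'
  have hD'mem : ∀ g : G, g ∈ D' ↔ g⁻¹ ∈ D := by
    intro g
    rw [hD', Finset.mem_image]
    constructor
    · rintro ⟨a, ha, rfl⟩; simpa using ha
    · intro hg; exact ⟨g⁻¹, hg, inv_inv g⟩
  have hdisj2 : Disjoint D D' := by
    rw [Finset.disjoint_left]
    intro g hg hg'
    exact hDinv g hg ((hD'mem g).1 hg')
  have hdisj1 : Disjoint (univ.filter (· ∈ Hsub)) (D ∪ D') := by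
    rw [Finset.disjoint_left]
    intro g hg hg'
    have hH : g ∈ Hsub := (Finset.mem_filter.1 hg).2
    obtain ⟨h1, h2⟩ := (hDH g).1 hH
    rcases Finset.mem_union.1 hg' with h | h
    · exact h1 h
    · exact h2 ((hD'mem g).1 h)
  have hunion : univ.filter (· ∈ Hsub) ∪ (D ∪ D') = univ := by
    ext g
    simp only [Finset.mem_union, Finset.mem_filter, Finset.mem_univ, true_and, iff_true]
    by_cases h1 : g ∈ D
    · exact Or.inr (Or.inl h1)
    · by_cases h2 : g⁻¹ ∈ D
      · exact Or.inr (Or.inr ((hD'mem g).2 h2))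
      · exact Or.inl ((hDH g).2 ⟨h1, h2⟩)
  set s := ∑ d ∈ D, χ d with hs
  have hD'sum : ∑ g ∈ D', χ g = (starRingEnd ℂ) s := by
    rw [hD', Finset.sum_image (fun a _ b _ h => inv_injective h), hs, map_sum]
    exact Finset.sum_congr rfl fun d _ => (hχconj d).symm
  have hs1 : s + (starRingEnd ℂ) s = 0 := by
    have := hGsum
    rw [← hunion, Finset.sum_union hdisj1, Finset.sum_union hdisj2, hHsum, hD'sum] at this
    simpa using this
  -- cardinality of H
  set T₀ : Finset (ZMod p × ZMod p × ZMod 4) := univ ×ˢ ({0} ×ˢ {0, 2}) with hT₀def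
  have hT₀ : ∀ t : ZMod p × ZMod p × ZMod 4,
      t ∈ T₀ ↔ t.2.1 = 0 ∧ (t.2.2 = 0 ∨ t.2.2 = 2) := by
    intro t
    rw [hT₀def]
    simp only [Finset.mem_product, Finset.mem_univ, true_and, Finset.mem_insert,
      Finset.mem_singleton]
  have hHfin : univ.filter (· ∈ Hsub) = T₀.image φ := by
    apply Finset.Subset.antisymm
    · intro g hg
      have hgH : g ∈ Hsub := (Finset.mem_filter.1 hg).2
      -- the image is a subgroup
      let K₀ : Subgroup G :=
        { carrier := ↑(T₀.image φ)
          mul_mem' := by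
            rintro w w' hw hw'
            simp only [Finset.coe_image, Set.mem_image, Finset.mem_coe] at hw hw' ⊢
            obtain ⟨t, ht, rfl⟩ := hw
            obtain ⟨t', ht', rfl⟩ := hw'
            obtain ⟨hb, hc⟩ := (hT₀ t).1 ht
            obtain ⟨hb', hc'⟩ := (hT₀ t').1 ht'
            refine ⟨(t.1 + t'.1, t.2.1 + (-1 : ZMod p) ^ t.2.2.val * t'.2.1,
              t.2.2 + t'.2.2), ?_, (hmul t t').symm⟩
            rw [hT₀]
            refine ⟨by rw [hb, hb']; ring, ?_⟩
            rcases hc with h | h <;> rcases hc' with h' | h' <;>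
              simp only [Prod.snd] <;> rw [h, h'] <;> decide
          one_mem' := by
            simp only [Finset.coe_image, Set.mem_image, Finset.mem_coe]
            exact ⟨(0, 0, 0), (hT₀ _).2 (by simp), hzero⟩
          inv_mem' := by
            intro w hw
            simp only [Finset.coe_image, Set.mem_image, Finset.mem_coe] at hw ⊢
            obtain ⟨t, ht, rfl⟩ := hw
            obtain ⟨hb, hc⟩ := (hT₀ t).1 ht
            refine ⟨(-t.1, -((-1 : ZMod p) ^ ((-t.2.2).val) * t.2.1), -t.2.2), ?_,
              (nf_inv hxp hyp hz4 hxy hxz hzy' t).symm⟩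
            rw [hT₀]
            refine ⟨by rw [hb]; ring, ?_⟩
            rcases hc with h | h <;> simp only [Prod.snd] <;> rw [h] <;> decide }
      have hle : Hsub ≤ K₀ := by
        rw [hHsub, Subgroup.closure_le]
        intro w hw
        rcases hw with rfl | rfl
        · exact Finset.mem_coe.2 (Finset.mem_image.2 ⟨(1, 0, 0), (hT₀ _).2 (by simp), hx1⟩)
        · exact Finset.mem_coe.2 (Finset.mem_image.2 ⟨(0, 0, 2), (hT₀ _).2 (by simp), hz2⟩)
      exact Finset.mem_coe.1 (hle hgH)
    · intro g hg
      rw [Finset.mem_image] at hg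
      obtain ⟨t, ht, rfl⟩ := hg
      obtain ⟨hb, hc⟩ := (hT₀ t).1 ht
      rw [Finset.mem_filter]
      refine ⟨Finset.mem_univ _, ?_⟩
      have hxmem : x ^ t.1.val ∈ Hsub := pow_mem hxH _
      have hz2mem : z ^ 2 ∈ Hsub := Subgroup.subset_closure (by simp)
      have hφt : φ t = x ^ t.1.val * y ^ t.2.1.val * z ^ t.2.2.val := rfl
      rcases hc with h | h
      · rw [hφt, hb, h]
        simpa [ZMod.val_zero] using hxmem
      · rw [hφt, hb, h]
        have : (2 : ZMod 4).val = 2 := rfl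
        rw [this, ZMod.val_zero]
        simpa using Subgroup.mul_mem _ hxmem hz2mem
  have hHcard : (univ.filter (· ∈ Hsub)).card = 2 * p := by
    rw [hHfin, Finset.card_image_of_injective _ hbij.1, hT₀def]
    rw [Finset.card_product, Finset.card_product]
    have h1 : ({0} : Finset (ZMod p)).card = 1 := Finset.card_singleton _
    have h2 : ({0, 2} : Finset (ZMod 4)).card = 2 := by decide
    rw [h1, h2, Finset.card_univ, ZMod.card]
    ring
  -- |D|
  have hkcard : 2 * D.card + 2 * p = 4 * p ^ 2 := by
    have h1 : (univ : Finset G).card =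
        (univ.filter (· ∈ Hsub)).card + (D.card + D'.card) := by
      conv_lhs => rw [← hunion]
      rw [Finset.card_union_of_disjoint hdisj1, Finset.card_union_of_disjoint hdisj2]
    have h2 : D'.card = D.card := Finset.card_image_of_injective _ inv_injective
    rw [Finset.card_univ, hcard, hHcard, h2] at h1
    omega
  -- counting identity for l
  have hcnt : D.card * D.card = D.card + (4 * p ^ 2 - 1) * l := by
    have h0 : ∑ g ∈ univ, ((D ×ˢ D).filter (fun q => q.1 * q.2⁻¹ = g)).card
        = (D ×ˢ D).card := (Finset.card_eq_sum_card_fiberwise (fun q _ => Finset.mem_univ _)).symm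
    have h1 : ((D ×ˢ D).filter (fun q => q.1 * q.2⁻¹ = (1 : G))).card = D.card := by
      have : (D ×ˢ D).filter (fun q => q.1 * q.2⁻¹ = (1 : G)) = D.diag := by
        ext ⟨a, b⟩
        simp only [Finset.mem_filter, Finset.mem_product, Finset.mem_diag, mul_inv_eq_one]
        constructor
        · rintro ⟨⟨ha, -⟩, rfl⟩; exact ⟨ha, rfl⟩
        · rintro ⟨ha, rfl⟩; exact ⟨⟨ha, ha⟩, rfl⟩
      rw [this, Finset.diag_card]
    have h2 : ∑ g ∈ univ.erase (1 : G), ((D ×ˢ D).filter (fun q => q.1 * q.2⁻¹ = g)).card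
        = (4 * p ^ 2 - 1) * l := by
      rw [Finset.sum_congr rfl (fun g hg => hDiff g (Finset.mem_erase.1 hg).1),
        Finset.sum_const, smul_eq_mul, Finset.card_erase_of_mem (Finset.mem_univ _),
        Finset.card_univ, hcard]
    rw [← Finset.add_sum_erase _ _ (Finset.mem_univ (1 : G)), h1, h2] at h0
    rw [h0, Finset.card_product]
  -- character product identity
  have hprod : s * (starRingEnd ℂ) s = (D.card : ℂ) - (l : ℂ) := by
    have e1 : s * (starRingEnd ℂ) s = ∑ d ∈ D, ∑ e ∈ D, χ d * χ e⁻¹ := by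
      rw [hs, map_sum, Finset.sum_mul_sum]
      exact Finset.sum_congr rfl fun d _ => Finset.sum_congr rfl fun e _ => by rw [hχconj]
    have e2 : ∑ d ∈ D, ∑ e ∈ D, χ d * χ e⁻¹ = ∑ q ∈ D ×ˢ D, χ (q.1 * q.2⁻¹) := by
      rw [Finset.sum_product]
      exact Finset.sum_congr rfl fun d _ => Finset.sum_congr rfl fun e _ => (hχmul _ _).symm
    have e3 : ∑ q ∈ D ×ˢ D, χ (q.1 * q.2⁻¹)
        = ∑ g ∈ univ, ∑ q ∈ (D ×ˢ D).filter (fun q => q.1 * q.2⁻¹ = g), χ (q.1 * q.2⁻¹) :=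
      (Finset.sum_fiberwise_of_maps_to (fun q _ => Finset.mem_univ _) _).symm
    have e4 : ∀ g : G, ∑ q ∈ (D ×ˢ D).filter (fun q => q.1 * q.2⁻¹ = g), χ (q.1 * q.2⁻¹)
        = (((D ×ˢ D).filter (fun q => q.1 * q.2⁻¹ = g)).card : ℂ) * χ g := by
      intro g
      rw [Finset.sum_congr rfl (fun q hq => by rw [(Finset.mem_filter.1 hq).2]),
        Finset.sum_const, nsmul_eq_mul]
    have h1 : ((D ×ˢ D).filter (fun q => q.1 * q.2⁻¹ = (1 : G))).card = D.card := by
      have hdg : (D ×ˢ D).filter (fun q => q.1 * q.2⁻¹ = (1 : G)) = D.diag := by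
        ext ⟨a, b⟩
        simp only [Finset.mem_filter, Finset.mem_product, Finset.mem_diag, mul_inv_eq_one]
        constructor
        · rintro ⟨⟨ha, -⟩, rfl⟩; exact ⟨ha, rfl⟩
        · rintro ⟨ha, rfl⟩; exact ⟨⟨ha, ha⟩, rfl⟩
      rw [hdg, Finset.diag_card]
    have h5 : ∑ g ∈ univ.erase (1 : G),
          ((((D ×ˢ D).filter (fun q => q.1 * q.2⁻¹ = g)).card : ℂ) * χ g)
        = (l : ℂ) * ∑ g ∈ univ.erase (1 : G), χ g := by
      rw [Finset.mul_sum]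
      exact Finset.sum_congr rfl fun g hg => by rw [hDiff g (Finset.mem_erase.1 hg).1]
    have h6 : ∑ g ∈ univ.erase (1 : G), χ g = -1 := by
      have h7 := Finset.add_sum_erase univ χ (Finset.mem_univ (1 : G))
      rw [hGsum, hχ1] at h7
      linear_combination h7
    rw [e1, e2, e3, Finset.sum_congr rfl fun g _ => e4 g,
      ← Finset.add_sum_erase _ _ (Finset.mem_univ (1 : G)), h1, h5, h6, hχ1]
    ring
  have hconjs : (starRingEnd ℂ) s = -s := by linear_combination hs1
  -- integer arithmetic: |D| = 2p² - p and l = p² - p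
  have hp2 : (2 : ℤ) ≤ (p : ℤ) := by exact_mod_cast hp.two_le
  have hPk : (D.card : ℤ) = 2 * (p : ℤ) ^ 2 - p := by
    have h8 := hkcard
    zify at h8
    linarith
  have hl : (l : ℤ) = (p : ℤ) ^ 2 - p := by
    have h9 := hcnt
    zify [show (1 : ℕ) ≤ 4 * p ^ 2 from by nlinarith [hp.two_le]] at h9
    have h4 : ((4 : ℤ) * p ^ 2 - 1) * (l : ℤ) = ((4 : ℤ) * p ^ 2 - 1) * ((p : ℤ) ^ 2 - p) := by
      linear_combination (-1 : ℤ) * h9 + ((D.card : ℤ) + 2 * (p : ℤ) ^ 2 - (p : ℤ) - 1) * hPk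
    have hne : ((4 : ℤ) * p ^ 2 - 1) ≠ 0 := by nlinarith
    exact mul_left_cancel₀ hne h4
  have hkl : (D.card : ℂ) - (l : ℂ) = (p : ℂ) ^ 2 := by
    have c1 : ((D.card : ℤ) : ℂ) = ((2 * (p : ℤ) ^ 2 - p : ℤ) : ℂ) :=
      congrArg (fun t : ℤ => (t : ℂ)) hPk
    have c2 : ((l : ℤ) : ℂ) = (((p : ℤ) ^ 2 - p : ℤ) : ℂ) :=
      congrArg (fun t : ℤ => (t : ℂ)) hl
    push_cast at c1 c2
    rw [c1, c2]; ring
  have hs2 : s ^ 2 = -((p : ℂ) ^ 2) := by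
    have h10 := hprod
    rw [hconjs, hkl] at h10
    linear_combination -h10
  -- the number-theoretic contradiction: i ∉ ℚ(ζ_p)
  have hζint : IsIntegral ℚ ζ := (hζ.isIntegral hp.pos).tower_top
  set K : IntermediateField ℚ ℂ := IntermediateField.adjoin ℚ {ζ} with hK
  have hζK : ζ ∈ K := IntermediateField.subset_adjoin ℚ {ζ} (Set.mem_singleton ζ)
  haveI : FiniteDimensional ℚ K := IntermediateField.adjoin.finiteDimensional hζint
  haveI : CharZero K := charZero_of_injective_algebraMap (algebraMap ℚ K).injective
  have hχK : ∀ g : G, χ g ∈ K :=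
    fun g => mul_mem (pow_mem hζK _) (pow_mem (neg_mem (one_mem K)) _)
  have hsK : s ∈ K := by
    rw [hs]
    exact sum_mem fun d _ => hχK d
  have hpK : ((p : ℂ)) ∈ K := by
    have := IntermediateField.natCast_mem K p
    simpa using this
  have hpne : (p : ℂ) ≠ 0 := Nat.cast_ne_zero.2 hp.ne_zero
  set τ : K := (⟨s, hsK⟩ : K) / ⟨(p : ℂ), hpK⟩ with hτ
  have hτval : (τ : ℂ) = s / (p : ℂ) := rfl
  have hτ2 : τ ^ 2 = -1 := by
    apply Subtype.ext
    have hv : ((τ ^ 2 : K) : ℂ) = ((τ : ℂ)) ^ 2 := by push_cast; ring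
    rw [hv, hτval]
    have hneg : ((-1 : K) : ℂ) = -1 := by push_cast; ring
    rw [hneg]
    field_simp
    linear_combination hs2
  have hτ4 : τ ^ 4 = 1 := by
    have : τ ^ 4 = (τ ^ 2) ^ 2 := by ring
    rw [this, hτ2]
    ring
  have hτ2ne : τ ^ 2 ≠ 1 := by
    rw [hτ2]
    intro hcontra
    have : ((-1 : K) : ℂ) = ((1 : K) : ℂ) := congrArg _ hcontra
    norm_num at this
  have hordτ : orderOf τ = 4 := by
    have h11 := orderOf_eq_prime_pow (p := 2) (n := 1) (x := τ)
      (by rw [pow_one]; exact hτ2ne) (by norm_num; exact hτ4)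
    norm_num at h11
    exact h11
  have hordζ : orderOf (⟨ζ, hζK⟩ : K) = p := by
    have hinj : Function.Injective (algebraMap K ℂ) := (algebraMap K ℂ).injective
    have h12 : orderOf ((algebraMap K ℂ).toMonoidHom (⟨ζ, hζK⟩ : K)) = orderOf (⟨ζ, hζK⟩ : K) :=
      orderOf_injective _ hinj _
    have h13 : (algebraMap K ℂ).toMonoidHom (⟨ζ, hζK⟩ : K) = ζ := rfl
    rw [h13] at h12
    rw [← h12, ← hζ.eq_orderOf]
  have cop : Nat.Coprime 4 p := by
    have hne2 : p ≠ 2 := by omega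
    have c2 : Nat.Coprime 2 p := (Nat.coprime_primes Nat.prime_two hp).2 (Ne.symm hne2)
    exact Nat.Coprime.pow_left 2 c2
  have hordμ : orderOf (τ * (⟨ζ, hζK⟩ : K)) = 4 * p := by
    rw [(Commute.all _ _).orderOf_mul_eq_mul_orderOf_of_coprime
      (by rw [hordτ, hordζ]; exact cop), hordτ, hordζ]
  have hprimμ : IsPrimitiveRoot (τ * (⟨ζ, hζK⟩ : K)) (4 * p) := by
    rw [← hordμ]
    exact IsPrimitiveRoot.orderOf _
  have hminμ := Polynomial.cyclotomic_eq_minpoly_rat hprimμ (Nat.mul_pos (by norm_num) hp.pos)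
  have hdeg : (4 * p).totient ≤ Module.finrank ℚ K := by
    calc (4 * p).totient = (minpoly ℚ (τ * (⟨ζ, hζK⟩ : K))).natDegree := by
          rw [← hminμ, Polynomial.natDegree_cyclotomic]
      _ ≤ Module.finrank ℚ K := minpoly.natDegree_le _
  have hrank : Module.finrank ℚ K = p - 1 := by
    rw [IntermediateField.adjoin.finrank hζint, ← Polynomial.cyclotomic_eq_minpoly_rat hζ hp.pos,
      Polynomial.natDegree_cyclotomic, Nat.totient_prime hp]
  have htot : (4 * p).totient = 2 * (p - 1) := by
    rw [Nat.totient_mul cop, Nat.totient_prime hp, show Nat.totient 4 = 2 from by decide]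
  rw [htot, hrank] at hdeg
  have := hp.two_le
  omega
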